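/- Fix real numbers a < b and constants A, B, c, M > 0. Suppose that for all n ≥ 1: |K_n^{(l,m)}(x,y)| ≤ A n^{l+m}/(|x−y| + 1/n) for all x, y ∈ [a,b] and all l, m ∈ {0,1}; K_n(x,x) ≥ B n and |K_n^{(0,1)}(x,x)| ≤ M n K_n(x,x) for all x ∈ [a,b]; and v_n(t) ≥ c for all t ∈ [na, nb]. Then there is a constant C > 0, depending only on A, B, c, M, such that for all n ≥ 1 and all s, t ∈ [na, nb], |r̃''_n(s,t)| ≤ C/(|s−t| + 1). -/

import Mathlib

set_option autoImplicit false

open MeasureTheory Real Set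

/-- `Kder p n l m x y = ∑_{j=0}^n p_j^{(l)}(x) p_j^{(m)}(y)`. -/
noncomputable def Kder (p : ℕ → Polynomial ℝ) (n l m : ℕ) (x y : ℝ) : ℝ :=
  ∑ j ∈ Finset.range (n + 1),
    (Polynomial.derivative^[l] (p j)).eval x * (Polynomial.derivative^[m] (p j)).eval y

/-- `v_n(t)`. -/
noncomputable def vFun (p : ℕ → Polynomial ℝ) (n : ℕ) (t : ℝ) : ℝ :=
  Real.sqrt ((1 / (n : ℝ) ^ 2) * (Kder p n 1 1 (t / n) (t / n) / Kder p n 0 0 (t / n) (t / n))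
    - (1 / (n : ℝ) ^ 2) * (Kder p n 0 1 (t / n) (t / n) / Kder p n 0 0 (t / n) (t / n)) ^ 2)

/-- `r̃''_n(s,t)`. -/
noncomputable def rtil'' (p : ℕ → Polynomial ℝ) (n : ℕ) (s t : ℝ) : ℝ :=
  (1 / (vFun p n s * vFun p n t *
      Real.sqrt (Kder p n 0 0 (s / n) (s / n) * Kder p n 0 0 (t / n) (t / n)))) *
    (Kder p n 1 1 (s / n) (t / n) / (n : ℝ) ^ 2
      - Kder p n 0 1 (t / n) (t / n) * Kder p n 1 0 (s / n) (t / n)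
          / ((n : ℝ) ^ 2 * Kder p n 0 0 (t / n) (t / n))
      - Kder p n 0 1 (s / n) (s / n) * Kder p n 0 1 (s / n) (t / n)
          / ((n : ℝ) ^ 2 * Kder p n 0 0 (s / n) (s / n))
      + Kder p n 0 1 (t / n) (t / n) * Kder p n 0 1 (s / n) (s / n) * Kder p n 0 0 (s / n) (t / n)
          / ((n : ℝ) ^ 2 * Kder p n 0 0 (t / n) (t / n) * Kder p n 0 0 (s / n) (s / n)))

set_option maxHeartbeats 1600000 in
theorem rtil''_decay (a b : ℝ) (hab : a < b) (A B c M : ℝ)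
    (hA : 0 < A) (hB : 0 < B) (hc : 0 < c) (hM : 0 < M)
    (p : ℕ → Polynomial ℝ)
    (hK : ∀ n : ℕ, 1 ≤ n → ∀ l ≤ 1, ∀ m ≤ 1, ∀ x ∈ Set.Icc a b, ∀ y ∈ Set.Icc a b,
      |Kder p n l m x y| ≤ A * (n : ℝ) ^ (l + m) / (|x - y| + 1 / n))
    (hKdiag : ∀ n : ℕ, 1 ≤ n → ∀ x ∈ Set.Icc a b, Kder p n 0 0 x x ≥ B * n)
    (hK01diag : ∀ n : ℕ, 1 ≤ n → ∀ x ∈ Set.Icc a b,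
      |Kder p n 0 1 x x| ≤ M * n * Kder p n 0 0 x x)
    (hv : ∀ n : ℕ, 1 ≤ n → ∀ t ∈ Set.Icc ((n : ℝ) * a) ((n : ℝ) * b), c ≤ vFun p n t) :
    ∃ C : ℝ, 0 < C ∧ ∀ n : ℕ, 1 ≤ n → ∀ s ∈ Set.Icc ((n : ℝ) * a) ((n : ℝ) * b),
      ∀ t ∈ Set.Icc ((n : ℝ) * a) ((n : ℝ) * b),
        |rtil'' p n s t| ≤ C / (|s - t| + 1) := by
  refine ⟨A * (1 + M) ^ 2 / (c ^ 2 * B), by positivity, ?_⟩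
  intro n hn s hs t ht
  have hn0 : (0 : ℝ) < n := by exact_mod_cast hn
  have hx : s / n ∈ Set.Icc a b := by
    constructor
    · rw [le_div_iff₀ hn0]; have := hs.1; nlinarith
    · rw [div_le_iff₀ hn0]; have := hs.2; nlinarith
  have hy : t / n ∈ Set.Icc a b := by
    constructor
    · rw [le_div_iff₀ hn0]; have := ht.1; nlinarith
    · rw [div_le_iff₀ hn0]; have := ht.2; nlinarith
  set D : ℝ := |s - t| + 1 with hDdef
  have hD : (0 : ℝ) < D := by positivity
  have hdist : |s / n - t / n| + 1 / n = D / n := by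
    rw [div_sub_div_same, abs_div, abs_of_pos hn0, ← add_div]
  -- kernel bounds in multiplied-out form
  have key : ∀ l ≤ 1, ∀ m ≤ 1,
      |Kder p n l m (s / n) (t / n)| * D ≤ A * (n : ℝ) ^ (l + m) * n := by
    intro l hl m hm
    have h := hK n hn l hl m hm (s / n) hx (t / n) hy
    rw [hdist, div_div_eq_mul_div] at h
    exact (le_div_iff₀ hD).mp h
  have h11 := key 1 le_rfl 1 le_rfl
  have h10 := key 1 le_rfl 0 (by norm_num)
  have h01 := key 0 (by norm_num) 1 le_rfl
  have h00 := key 0 (by norm_num) 0 (by norm_num)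
  have hKss : B * n ≤ Kder p n 0 0 (s / n) (s / n) := hKdiag n hn (s / n) hx
  have hKtt : B * n ≤ Kder p n 0 0 (t / n) (t / n) := hKdiag n hn (t / n) hy
  have h01ss : |Kder p n 0 1 (s / n) (s / n)| ≤ M * n * Kder p n 0 0 (s / n) (s / n) :=
    hK01diag n hn (s / n) hx
  have h01tt : |Kder p n 0 1 (t / n) (t / n)| ≤ M * n * Kder p n 0 0 (t / n) (t / n) :=
    hK01diag n hn (t / n) hy
  have hvs : c ≤ vFun p n s := hv n hn s hs
  have hvt : c ≤ vFun p n t := hv n hn t ht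
  unfold rtil''
  set k11 := Kder p n 1 1 (s / n) (t / n) with hk11
  set k10 := Kder p n 1 0 (s / n) (t / n) with hk10
  set k01 := Kder p n 0 1 (s / n) (t / n) with hk01
  set k00 := Kder p n 0 0 (s / n) (t / n) with hk00
  set kss := Kder p n 0 0 (s / n) (s / n) with hkss
  set ktt := Kder p n 0 0 (t / n) (t / n) with hktt
  set ass := Kder p n 0 1 (s / n) (s / n) with hass
  set att := Kder p n 0 1 (t / n) (t / n) with hatt
  set vs := vFun p n s with hvsdef
  set vt := vFun p n t with hvtdef
  have hkss0 : (0 : ℝ) < kss := lt_of_lt_of_le (by positivity) hKss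
  have hktt0 : (0 : ℝ) < ktt := lt_of_lt_of_le (by positivity) hKtt
  have hvs0 : (0 : ℝ) < vs := lt_of_lt_of_le hc hvs
  have hvt0 : (0 : ℝ) < vt := lt_of_lt_of_le hc hvt
  have hsqrt : B * n ≤ Real.sqrt (kss * ktt) := by
    calc B * n = Real.sqrt ((B * n) * (B * n)) := (Real.sqrt_mul_self (by positivity)).symm
      _ ≤ Real.sqrt (kss * ktt) := Real.sqrt_le_sqrt
          (mul_le_mul hKss hKtt (by positivity) (le_trans (by positivity) hKss))
  have hsqrt0 : (0 : ℝ) < Real.sqrt (kss * ktt) := lt_of_lt_of_le (by positivity) hsqrt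
  have hP : c * c * (B * n) ≤ vs * vt * Real.sqrt (kss * ktt) := by
    have h1 : c * c ≤ vs * vt := mul_le_mul hvs hvt hc.le hvs0.le
    exact mul_le_mul h1 hsqrt (by positivity) (by positivity)
  have hP0 : (0 : ℝ) < vs * vt * Real.sqrt (kss * ktt) := by positivity
  -- bound each term of the bracket
  have hT1 : |k11 / (n : ℝ) ^ 2| ≤ A * n / D := by
    rw [abs_div, abs_of_pos (by positivity : (0:ℝ) < (n:ℝ) ^ 2), div_le_div_iff₀ (by positivity) hD]
    calc |k11| * D ≤ A * (n : ℝ) ^ (1 + 1) * n := h11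
      _ = A * n * (n : ℝ) ^ 2 := by ring
  have hT2 : |att * k10 / ((n : ℝ) ^ 2 * ktt)| ≤ M * A * n / D := by
    rw [abs_div, abs_of_pos (by positivity : (0:ℝ) < (n:ℝ) ^ 2 * ktt),
      div_le_div_iff₀ (by positivity) hD, abs_mul]
    calc |att| * |k10| * D = |att| * (|k10| * D) := by ring
      _ ≤ (M * n * ktt) * (A * (n : ℝ) ^ (1 + 0) * n) :=
          mul_le_mul h01tt h10 (by positivity) (by positivity)
      _ = M * A * n * ((n : ℝ) ^ 2 * ktt) := by ring
  have hT3 : |ass * k01 / ((n : ℝ) ^ 2 * kss)| ≤ M * A * n / D := by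
    rw [abs_div, abs_of_pos (by positivity : (0:ℝ) < (n:ℝ) ^ 2 * kss),
      div_le_div_iff₀ (by positivity) hD, abs_mul]
    calc |ass| * |k01| * D = |ass| * (|k01| * D) := by ring
      _ ≤ (M * n * kss) * (A * (n : ℝ) ^ (0 + 1) * n) :=
          mul_le_mul h01ss h01 (by positivity) (by positivity)
      _ = M * A * n * ((n : ℝ) ^ 2 * kss) := by ring
  have hT4 : |att * ass * k00 / ((n : ℝ) ^ 2 * ktt * kss)| ≤ M * M * A * n / D := by
    rw [abs_div, abs_of_pos (by positivity : (0:ℝ) < (n:ℝ) ^ 2 * ktt * kss),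
      div_le_div_iff₀ (by positivity) hD, abs_mul, abs_mul]
    calc |att| * |ass| * |k00| * D = (|att| * |ass|) * (|k00| * D) := by ring
      _ ≤ ((M * n * ktt) * (M * n * kss)) * (A * (n : ℝ) ^ (0 + 0) * n) := by
          refine mul_le_mul (mul_le_mul h01tt h01ss (by positivity) (by positivity)) h00
            (by positivity) (by positivity)
      _ = M * M * A * n * ((n : ℝ) ^ 2 * ktt * kss) := by ring
  have hBr : |k11 / (n : ℝ) ^ 2 - att * k10 / ((n : ℝ) ^ 2 * ktt)
      - ass * k01 / ((n : ℝ) ^ 2 * kss)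
      + att * ass * k00 / ((n : ℝ) ^ 2 * ktt * kss)| ≤ A * (1 + M) ^ 2 * n / D := by
    have habs : |k11 / (n : ℝ) ^ 2 - att * k10 / ((n : ℝ) ^ 2 * ktt)
        - ass * k01 / ((n : ℝ) ^ 2 * kss)
        + att * ass * k00 / ((n : ℝ) ^ 2 * ktt * kss)| ≤
        |k11 / (n : ℝ) ^ 2| + |att * k10 / ((n : ℝ) ^ 2 * ktt)|
        + |ass * k01 / ((n : ℝ) ^ 2 * kss)|
        + |att * ass * k00 / ((n : ℝ) ^ 2 * ktt * kss)| := by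
      have h1 := abs_add_le (k11 / (n : ℝ) ^ 2 - att * k10 / ((n : ℝ) ^ 2 * ktt)
        - ass * k01 / ((n : ℝ) ^ 2 * kss)) (att * ass * k00 / ((n : ℝ) ^ 2 * ktt * kss))
      have h2 := abs_sub (k11 / (n : ℝ) ^ 2 - att * k10 / ((n : ℝ) ^ 2 * ktt))
        (ass * k01 / ((n : ℝ) ^ 2 * kss))
      have h3 := abs_sub (k11 / (n : ℝ) ^ 2) (att * k10 / ((n : ℝ) ^ 2 * ktt))
      linarith
    have hsum : A * n / D + M * A * n / D + M * A * n / D + M * M * A * n / D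
        = A * (1 + M) ^ 2 * n / D := by ring
    linarith
  rw [abs_mul, abs_div, abs_one, abs_of_pos hP0, one_div, inv_mul_eq_div]
  calc _ ≤ (A * (1 + M) ^ 2 * n / D) / (c * c * (B * n)) :=
        div_le_div₀ (by positivity) hBr (by positivity) hP
    _ = A * (1 + M) ^ 2 / (c ^ 2 * B) / D := by
        field_simp
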